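/- Lifting attracting cycles to higher degree (dynamical part): let p be monic of degree d and q ∈ ℂ^d a periodic point of W_p of period n such that all eigenvalues of the Jacobian of W_p^{∘n} at q have absolute value < 1. Then for all α ∈ ℂ of sufficiently large absolute value, q̃ = (q, α) ∈ ℂ^{d+1} is a periodic point of period n for W_{p̃} with p̃(Z) = (Z−α)p(Z), and all eigenvalues of the Jacobian of W_{p̃}^{∘n} at q̃ have absolute value < 1. -/

import Mathlib

open Polynomial Finset

/-- The Weierstrass iteration map of a polynomial `p` in dimension `m`. -/
noncomputable def wmap {m : ℕ} (p : Polynomial ℂ) (z : Fin m → ℂ) : Fin m → ℂ :=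
  fun k => z k - p.eval (z k) / ∏ j ∈ Finset.univ.erase k, (z k - z j)

/-- The Jacobian matrix (of partial complex derivatives) of a map
`F : ℂ^m → ℂ^m` at the point `z`. -/
noncomputable def jacobianMatrix {m : ℕ} (F : (Fin m → ℂ) → Fin m → ℂ)
    (z : Fin m → ℂ) : Matrix (Fin m) (Fin m) ℂ :=
  Matrix.of fun i j => deriv (fun w => F (Function.update z j w) i) (z j)

open Filter Topology

namespace WLift

lemma hasDerivAt_update {m : ℕ} (z : Fin m → ℂ) (j : Fin m) (w : ℂ) :
    HasDerivAt (fun w => Function.update z j w) (Pi.single j 1) w := by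
  have h : (fun w : ℂ => Function.update z j w)
      = fun w => z + (w - z j) • (Pi.single j 1 : Fin m → ℂ) := by
    funext w
    ext k
    rcases eq_or_ne k j with rfl | hk
    · simp
    · simp [Function.update_of_ne hk, Pi.single_eq_of_ne hk]
  rw [h]
  simpa using (((hasDerivAt_id w).sub_const (z j)).smul_const
    (Pi.single j 1 : Fin m → ℂ)).const_add z

lemma jacobian_apply {m : ℕ} {F : (Fin m → ℂ) → Fin m → ℂ} {z : Fin m → ℂ}
    (hF : DifferentiableAt ℂ F z) (i j : Fin m) :
    jacobianMatrix F z i j = fderiv ℂ F z (Pi.single j 1) i := by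
  have h0 : Function.update z j (z j) = z := Function.update_eq_self j z
  have hl : HasFDerivAt F (fderiv ℂ F z) (Function.update z j (z j)) := by
    rw [h0]; exact hF.hasFDerivAt
  have h1 : HasDerivAt (fun w => F (Function.update z j w))
      (fderiv ℂ F z (Pi.single j 1)) (z j) :=
    hl.comp_hasDerivAt (z j) (hasDerivAt_update z j (z j))
  have h2 : HasDerivAt (fun w => F (Function.update z j w) i)
      (fderiv ℂ F z (Pi.single j 1) i) (z j) :=
    (ContinuousLinearMap.proj i (R := ℂ) (φ := fun _ : Fin m => ℂ)).hasFDerivAt.comp_hasDerivAt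
      (z j) h1
  exact h2.deriv

lemma jacobian_comp {m : ℕ} {G F : (Fin m → ℂ) → Fin m → ℂ} {z : Fin m → ℂ}
    (hG : DifferentiableAt ℂ G (F z)) (hF : DifferentiableAt ℂ F z) :
    jacobianMatrix (fun v => G (F v)) z = jacobianMatrix G (F z) * jacobianMatrix F z := by
  have hGF : DifferentiableAt ℂ (fun v => G (F v)) z := hG.comp z hF
  ext i j
  rw [Matrix.mul_apply, jacobian_apply hGF]
  have hcomp : fderiv ℂ (fun v => G (F v)) z = (fderiv ℂ G (F z)).comp (fderiv ℂ F z) :=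
    fderiv_comp z hG hF
  rw [hcomp]
  set v := fderiv ℂ F z (Pi.single j 1) with hv
  have hvexp : v = ∑ k, v k • (Pi.single k 1 : Fin m → ℂ) := by
    funext l
    simp [Finset.sum_apply, Pi.single_apply]
  have hmain : fderiv ℂ G (F z) v = ∑ k, v k • fderiv ℂ G (F z) (Pi.single k 1) := by
    conv_lhs => rw [hvexp]
    rw [map_sum]
    exact Finset.sum_congr rfl fun k _ => by rw [map_smul]
  calc (fderiv ℂ G (F z)).comp (fderiv ℂ F z) (Pi.single j 1) i
      = fderiv ℂ G (F z) v i := rfl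
    _ = (∑ k, v k • fderiv ℂ G (F z) (Pi.single k 1)) i := by rw [hmain]
    _ = ∑ k, jacobianMatrix G (F z) i k * jacobianMatrix F z k j := by
        rw [Finset.sum_apply]
        refine Finset.sum_congr rfl fun k _ => ?_
        rw [jacobian_apply hG, jacobian_apply hF, ← hv]
        simp [mul_comm]

lemma jacobian_id {m : ℕ} (z : Fin m → ℂ) : jacobianMatrix id z = 1 := by
  ext i j
  rcases eq_or_ne i j with rfl | hij
  · simp [jacobianMatrix, Matrix.one_apply]
  · have : (fun w => Function.update z j w i) = fun _ => z i := by
      funext w; exact Function.update_of_ne hij w z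
    simp [jacobianMatrix, Matrix.one_apply, hij, this]

lemma wmap_differentiableAt {m : ℕ} (p : Polynomial ℂ) {z : Fin m → ℂ}
    (hz : Function.Injective z) : DifferentiableAt ℂ (wmap p) z := by
  rw [differentiableAt_pi]
  intro k
  have hproj : ∀ i : Fin m, DifferentiableAt ℂ (fun v : Fin m → ℂ => v i) z := fun i =>
    (ContinuousLinearMap.proj i (R := ℂ) (φ := fun _ : Fin m => ℂ)).differentiableAt
  have hne : (∏ j ∈ Finset.univ.erase k, (z k - z j)) ≠ 0 :=
    Finset.prod_ne_zero_iff.2 fun i hi =>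
      sub_ne_zero_of_ne fun h => (Finset.ne_of_mem_erase hi) (hz h.symm)
  have hdiv : (fun v : Fin m → ℂ => eval (v k) p / ∏ j ∈ Finset.univ.erase k, (v k - v j))
      = fun v : Fin m → ℂ =>
        eval (v k) p * (∏ j ∈ Finset.univ.erase k, (v k - v j))⁻¹ := by
    funext v; rw [div_eq_mul_inv]
  refine DifferentiableAt.sub (hproj k) ?_
  rw [hdiv]
  refine DifferentiableAt.mul ((p.differentiableAt).comp z (hproj k)) (DifferentiableAt.inv ?_ hne)
  exact HasFDerivAt.differentiableAt
    (HasFDerivAt.finset_prod (g := fun (i : Fin m) (v : Fin m → ℂ) => v k - v i)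
      (fun i _ => (((hproj k).sub (hproj i)).hasFDerivAt)))


section Part2
variable {d : ℕ}

lemma erase_last : (Finset.univ : Finset (Fin (d+1))).erase (Fin.last d)
    = Finset.univ.map Fin.castSuccEmb := by
  rw [Fin.univ_castSuccEmb, Finset.erase_cons]

lemma erase_castSucc (i : Fin d) : (Finset.univ : Finset (Fin (d+1))).erase i.castSucc
    = insert (Fin.last d) ((Finset.univ.erase i).map Fin.castSuccEmb) := by
  rw [Fin.univ_castSuccEmb, Finset.cons_eq_insert,
    Finset.erase_insert_of_ne (Fin.castSucc_lt_last i).ne']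
  exact congrArg (insert (Fin.last d)) (Finset.map_erase Fin.castSuccEmb Finset.univ i).symm

lemma last_not_mem_map (s : Finset (Fin d)) :
    Fin.last d ∉ s.map Fin.castSuccEmb := by
  intro h
  rcases Finset.mem_map.1 h with ⟨x, -, hx⟩
  exact (Fin.castSucc_lt_last x).ne hx

lemma prod_erase_castSucc (i : Fin d) (f : Fin (d+1) → ℂ) :
    ∏ j ∈ (Finset.univ : Finset (Fin (d+1))).erase i.castSucc, f j
      = f (Fin.last d) * ∏ j ∈ Finset.univ.erase i, f j.castSucc := by
  rw [erase_castSucc, Finset.prod_insert (last_not_mem_map _), Finset.prod_map]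
  rfl

lemma prod_erase_last (f : Fin (d+1) → ℂ) :
    ∏ j ∈ (Finset.univ : Finset (Fin (d+1))).erase (Fin.last d), f j
      = ∏ j : Fin d, f j.castSucc := by
  rw [erase_last, Finset.prod_map]
  rfl

/-- the last coordinate of `wmap ((X - C α) * p)` is constant `α` whenever the input has
last coordinate `α`. -/
lemma wmap_last (p : Polynomial ℂ) (α : ℂ) (v : Fin (d+1) → ℂ) (hv : v (Fin.last d) = α) :
    wmap ((X - C α) * p) v (Fin.last d) = α := by
  have h0 : eval α ((X - C α) * p) = 0 := by simp
  show v (Fin.last d) - _ / _ = α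
  rw [hv, h0, zero_div, sub_zero]

/-- coordinate `i.castSucc` of `wmap ((X - C α) * p) (snoc u α)` equals `(wmap p u) i`,
provided `u i ≠ α`. -/
lemma wmap_castSucc (p : Polynomial ℂ) (α : ℂ) (u : Fin d → ℂ) (i : Fin d) (hui : u i ≠ α) :
    wmap ((X - C α) * p) (Fin.snoc u α) i.castSucc = wmap p u i := by
  have hprod : ∏ j ∈ (Finset.univ : Finset (Fin (d+1))).erase i.castSucc,
      (u i - (Fin.snoc u α : Fin (d+1) → ℂ) j)
        = (u i - α) * ∏ j ∈ Finset.univ.erase i, (u i - u j) := by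
    rw [prod_erase_castSucc]
    simp [Fin.snoc_castSucc, Fin.snoc_last]
  simp only [wmap, Fin.snoc_castSucc, eval_mul, eval_sub, eval_X, eval_C]
  rw [hprod, mul_div_mul_left _ _ (sub_ne_zero_of_ne hui)]

lemma wmap_snoc (p : Polynomial ℂ) (α : ℂ) (u : Fin d → ℂ) (hu : ∀ i, u i ≠ α) :
    wmap ((X - C α) * p) (Fin.snoc u α) = Fin.snoc (wmap p u) α := by
  funext k
  induction k using Fin.lastCases with
  | last => rw [wmap_last p α _ (Fin.snoc_last _ _), Fin.snoc_last]
  | cast i => rw [wmap_castSucc p α u i (hu i), Fin.snoc_castSucc]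

end Part2
section Part3
variable {d : ℕ}

lemma jac_step_ul (p : Polynomial ℂ) (α : ℂ) {z : Fin d → ℂ} (hz : ∀ j, z j ≠ α)
    (i j : Fin d) :
    jacobianMatrix (wmap ((X - C α) * p)) (Fin.snoc z α) i.castSucc j.castSucc
      = jacobianMatrix (wmap p) z i j := by
  have hmem : {w : ℂ | Function.update z j w i ≠ α} ∈ 𝓝 (z j) := by
    rcases eq_or_ne i j with rfl | hij
    · have he : {w : ℂ | Function.update z i w i ≠ α} = {α}ᶜ := by
        ext w; simp
      rw [he]
      exact compl_singleton_mem_nhds (hz i)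
    · have he : {w : ℂ | Function.update z j w i ≠ α} = Set.univ := by
        ext w; simp [Function.update_of_ne hij, hz i]
      rw [he]; exact Filter.univ_mem
  have heq : (fun w => wmap ((X - C α) * p)
        (Function.update (Fin.snoc z α) j.castSucc w) i.castSucc)
      =ᶠ[𝓝 (z j)] fun w => wmap p (Function.update z j w) i := by
    filter_upwards [hmem] with w hw
    rw [← Fin.snoc_update, wmap_castSucc p α _ i hw]
  simp only [jacobianMatrix, Matrix.of_apply, Fin.snoc_castSucc]
  exact heq.deriv_eq

lemma jac_step_row (p : Polynomial ℂ) (α : ℂ) (z : Fin d → ℂ) (j : Fin d) :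
    jacobianMatrix (wmap ((X - C α) * p)) (Fin.snoc z α) (Fin.last d) j.castSucc = 0 := by
  have hconst : (fun w => wmap ((X - C α) * p)
      (Function.update (Fin.snoc z α) j.castSucc w) (Fin.last d)) = fun _ => α := by
    funext w
    refine wmap_last p α _ ?_
    rw [← Fin.snoc_update]
    exact Fin.snoc_last _ _
  simp only [jacobianMatrix, Matrix.of_apply, hconst, deriv_const']

lemma jac_step_corner (p : Polynomial ℂ) (α : ℂ) {z : Fin d → ℂ} (hz : ∀ j, z j ≠ α) :
    jacobianMatrix (wmap ((X - C α) * p)) (Fin.snoc z α) (Fin.last d) (Fin.last d)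
      = 1 - p.eval α / ∏ j, (α - z j) := by
  have hfun : (fun w => wmap ((X - C α) * p)
        (Function.update (Fin.snoc z α) (Fin.last d) w) (Fin.last d))
      = fun w => w - (w - α) * p.eval w / ∏ j, (w - z j) := by
    funext w
    rw [Fin.update_snoc_last]
    show (Fin.snoc z w : Fin (d+1) → ℂ) (Fin.last d)
        - eval ((Fin.snoc z w : Fin (d+1) → ℂ) (Fin.last d)) _ / _ = _
    rw [Fin.snoc_last]
    have hpr : ∏ j ∈ (Finset.univ : Finset (Fin (d+1))).erase (Fin.last d),
        (w - (Fin.snoc z w : Fin (d+1) → ℂ) j) = ∏ j, (w - z j) := by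
      rw [prod_erase_last]
      exact Finset.prod_congr rfl fun j _ => by rw [Fin.snoc_castSucc]
    rw [hpr]
    simp [eval_mul]
  have hD0 : (∏ j, (α - z j)) ≠ 0 :=
    Finset.prod_ne_zero_iff.2 fun j _ => sub_ne_zero_of_ne (Ne.symm (hz j))
  have hN : HasDerivAt (fun w : ℂ => (w - α) * p.eval w) (p.eval α) α := by
    have h := ((hasDerivAt_id α).sub_const α).fun_mul (Polynomial.hasDerivAt p α)
    simpa using h
  have hDdiff : DifferentiableAt ℂ (fun w : ℂ => ∏ j, (w - z j)) α :=
    DifferentiableAt.fun_finsetProd fun j _ => (differentiableAt_id.sub_const (z j))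
  have hq := hN.fun_div hDdiff.hasDerivAt hD0
  have hq' : HasDerivAt (fun w : ℂ => (w - α) * p.eval w / ∏ j, (w - z j))
      (p.eval α / ∏ j, (α - z j)) α := by
    refine hq.congr_deriv ?_
    rw [sub_self, zero_mul, zero_mul, sub_zero, sq]
    rw [mul_div_mul_right _ _ hD0]
  have hfull := (hasDerivAt_id α).sub hq'
  simp only [jacobianMatrix, Matrix.of_apply, hfun, Fin.snoc_last]
  exact hfull.deriv

end Part3
section Part4
variable {d : ℕ}

lemma spectrum_block (A : Matrix (Fin (d+1)) (Fin (d+1)) ℂ)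
    (B : Matrix (Fin d) (Fin d) ℂ) (Λ : ℂ)
    (hAB : ∀ i j : Fin d, A i.castSucc j.castSucc = B i j)
    (h0 : ∀ j : Fin d, A (Fin.last d) j.castSucc = 0)
    (hΛ : A (Fin.last d) (Fin.last d) = Λ) {μ : ℂ} (hμ : μ ∈ spectrum ℂ A) :
    μ ∈ spectrum ℂ B ∨ μ = Λ := by
  by_contra hcon
  push_neg at hcon
  obtain ⟨h1, h2⟩ := hcon
  have hB : IsUnit (algebraMap ℂ (Matrix (Fin d) (Fin d) ℂ) μ - B) :=
    spectrum.notMem_iff.1 h1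
  set M := algebraMap ℂ (Matrix (Fin (d+1)) (Fin (d+1)) ℂ) μ - A with hM
  have hlastcs : ∀ j : Fin d, Fin.last d ≠ j.castSucc := fun j =>
    (Fin.castSucc_lt_last j).ne'
  have hnatAdd : ∀ j : Fin 1, Fin.natAdd d j = Fin.last d := by
    intro j
    have : j = 0 := Subsingleton.elim _ _
    subst this
    ext
    simp [Fin.natAdd, Fin.last]
  have hsub : M.submatrix (finSumFinEquiv (m := d) (n := 1)) finSumFinEquiv
      = Matrix.fromBlocks (algebraMap ℂ (Matrix (Fin d) (Fin d) ℂ) μ - B)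
          (Matrix.of fun (i : Fin d) (_ : Fin 1) => M i.castSucc (Fin.last d)) 0
          (Matrix.of fun (_ : Fin 1) (_ : Fin 1) => μ - Λ) := by
    ext i j
    cases i with
    | inl i =>
      cases j with
      | inl j =>
        show M ((finSumFinEquiv (Sum.inl i))) ((finSumFinEquiv (Sum.inl j)))
          = (algebraMap ℂ (Matrix (Fin d) (Fin d) ℂ) μ - B) i j
        rw [finSumFinEquiv_apply_left, finSumFinEquiv_apply_left]
        show M i.castSucc j.castSucc = _
        rw [hM, Matrix.sub_apply, Matrix.sub_apply, hAB,
          Matrix.algebraMap_matrix_apply, Matrix.algebraMap_matrix_apply]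
        rcases eq_or_ne i j with rfl | hij
        · simp
        · rw [if_neg hij, if_neg (fun h => hij (Fin.castSucc_inj.1 h))]
      | inr j =>
        show M ((finSumFinEquiv (Sum.inl i))) ((finSumFinEquiv (Sum.inr j)))
          = M i.castSucc (Fin.last d)
        rw [finSumFinEquiv_apply_left, finSumFinEquiv_apply_right, hnatAdd]
        rfl
    | inr i =>
      cases j with
      | inl j =>
        show M ((finSumFinEquiv (Sum.inr i))) ((finSumFinEquiv (Sum.inl j))) = 0
        rw [finSumFinEquiv_apply_right, finSumFinEquiv_apply_left, hnatAdd]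
        show M (Fin.last d) j.castSucc = 0
        rw [hM, Matrix.sub_apply, h0 j, Matrix.algebraMap_matrix_apply,
          if_neg (hlastcs j), sub_zero]
      | inr j =>
        show M ((finSumFinEquiv (Sum.inr i))) ((finSumFinEquiv (Sum.inr j))) = μ - Λ
        rw [finSumFinEquiv_apply_right, finSumFinEquiv_apply_right, hnatAdd, hnatAdd]
        rw [hM, Matrix.sub_apply, hΛ, Matrix.algebraMap_matrix_apply, if_pos rfl]
        rfl
  have hdet : M.det = (algebraMap ℂ (Matrix (Fin d) (Fin d) ℂ) μ - B).det * (μ - Λ) := by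
    rw [← Matrix.det_submatrix_equiv_self finSumFinEquiv M, hsub,
      Matrix.det_fromBlocks_zero₂₁]
    congr 1
    rw [Matrix.det_fin_one]
    rfl
  have hMunit : IsUnit M := by
    rw [Matrix.isUnit_iff_isUnit_det, hdet]
    exact ((Matrix.isUnit_iff_isUnit_det _).1 hB).mul
      (isUnit_iff_ne_zero.2 (sub_ne_zero_of_ne h2))
  exact (spectrum.mem_iff.1 hμ) hMunit

end Part4
section Part5
variable {d : ℕ}

lemma eval_norm_bound (r : Polynomial ℂ) (e : ℕ) (hr : r.natDegree ≤ e) (α : ℂ)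
    (h1 : 1 ≤ ‖α‖) :
    ‖r.eval α‖ ≤ (∑ k ∈ Finset.range (e + 1), ‖r.coeff k‖) * ‖α‖ ^ e := by
  rw [Polynomial.eval_eq_sum_range' (lt_of_le_of_lt hr (lt_add_one e)), Finset.sum_mul]
  refine (norm_sum_le _ _).trans (Finset.sum_le_sum fun k hk => ?_)
  rw [norm_mul, norm_pow]
  exact mul_le_mul_of_nonneg_left
    (pow_le_pow_right₀ h1 (Nat.lt_succ_iff.1 (Finset.mem_range.1 hk))) (norm_nonneg _)

lemma r_natDegree_le (p : Polynomial ℂ) (hmonic : p.Monic) (hdeg : p.natDegree = d)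
    (z : Fin d → ℂ) : (p - ∏ j, (X - C (z j))).natDegree ≤ d - 1 := by
  set Dp := ∏ j, (X - C (z j)) with hDp
  have hDmonic : Dp.Monic := monic_prod_of_monic _ _ fun j _ => monic_X_sub_C _
  have hDdeg : Dp.natDegree = d := by
    rw [hDp, Polynomial.natDegree_prod _ _ fun j _ => (monic_X_sub_C (z j)).ne_zero]
    simp
  rcases eq_or_ne p Dp with h | h
  · simp [h]
  have hlt : (p - Dp).degree < p.degree := by
    refine Polynomial.degree_sub_lt ?_ hmonic.ne_zero ?_
    · rw [Polynomial.degree_eq_natDegree hmonic.ne_zero,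
        Polynomial.degree_eq_natDegree hDmonic.ne_zero, hdeg, hDdeg]
    · rw [hmonic.leadingCoeff, hDmonic.leadingCoeff]
  have hne : p - Dp ≠ 0 := sub_ne_zero_of_ne h
  have hlt' : (p - Dp).natDegree < p.natDegree := by
    rwa [← Polynomial.natDegree_lt_natDegree_iff hne] at hlt
  omega

lemma eventually_key (d : ℕ) (Cb K : ℝ) (hK0 : d = 0 → K = 0) :
    ∀ᶠ t in (atTop : Filter ℝ), 2 * K * t ^ (d - 1) + 1 ≤ (t - Cb) ^ d := by
  rcases Nat.eq_zero_or_pos d with rfl | hd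
  · exact Filter.Eventually.of_forall fun t => by simp [hK0 rfl]
  have hdeg : (X ^ (d - 1) : Polynomial ℝ).degree < ((X - C Cb) ^ d).degree := by
    rw [Polynomial.degree_X_pow, Polynomial.degree_pow, Polynomial.degree_X_sub_C]
    simp only [nsmul_eq_mul, mul_one]
    exact_mod_cast Nat.sub_lt hd Nat.one_pos
  have hQ : (X ^ (d - 1) : Polynomial ℝ) ≠ 0 := pow_ne_zero _ Polynomial.X_ne_zero
  have hlc : 0 ≤ ((X - C Cb) ^ d).leadingCoeff / (X ^ (d - 1) : Polynomial ℝ).leadingCoeff := by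
    rw [((Polynomial.monic_X_sub_C Cb).pow d).leadingCoeff, (Polynomial.monic_X_pow (d - 1)).leadingCoeff]
    norm_num
  have htend := Polynomial.div_tendsto_atTop_of_degree_gt ((X - C Cb) ^ d)
    (X ^ (d - 1)) hdeg hQ hlc
  filter_upwards [htend.eventually_ge_atTop (2 * K + 1), Filter.eventually_ge_atTop (1 : ℝ)]
    with t ht h1
  have hQpos : (0:ℝ) < t ^ (d - 1) := pow_pos (lt_of_lt_of_le one_pos h1) _
  rw [Polynomial.eval_pow, Polynomial.eval_pow, Polynomial.eval_sub, Polynomial.eval_X,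
    Polynomial.eval_C, le_div_iff₀ hQpos] at ht
  have h1p : (1:ℝ) ≤ t ^ (d - 1) := one_le_pow₀ h1
  nlinarith [ht, h1p]

lemma lambda_lt_one (p : Polynomial ℂ) (hmonic : p.Monic) (hdeg : p.natDegree = d)
    (z : Fin d → ℂ) (Cb : ℝ) (hCb : ∀ j, ‖z j‖ ≤ Cb) (α : ℂ) (hC : Cb < ‖α‖)
    (h1 : 1 ≤ ‖α‖)
    (hKey : 2 * (∑ k ∈ Finset.range (d - 1 + 1), ‖(p - ∏ j, (X - C (z j))).coeff k‖)
        * ‖α‖ ^ (d - 1) + 1 ≤ (‖α‖ - Cb) ^ d) :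
    ‖1 - p.eval α / ∏ j, (α - z j)‖ < 1 := by
  set Dp := ∏ j, (X - C (z j)) with hDp
  set r := p - Dp with hr
  set D := ∏ j, (α - z j) with hD
  have hDeval : Dp.eval α = D := by
    rw [hDp, Polynomial.eval_prod]
    exact Finset.prod_congr rfl fun j _ => by rw [Polynomial.eval_sub, Polynomial.eval_X,
      Polynomial.eval_C]
  have hnormD : (‖α‖ - Cb) ^ d ≤ ‖D‖ := by
    rw [hD, norm_prod]
    calc (‖α‖ - Cb) ^ d = ∏ _j : Fin d, (‖α‖ - Cb) := by
          rw [Finset.prod_const, Finset.card_univ, Fintype.card_fin]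
        _ ≤ ∏ j, ‖α - z j‖ := by
          refine Finset.prod_le_prod (fun j _ => by linarith) fun j _ => ?_
          calc ‖α‖ - Cb ≤ ‖α‖ - ‖z j‖ := by linarith [hCb j]
            _ ≤ ‖α - z j‖ := norm_sub_norm_le α (z j)
  have hrb : ‖r.eval α‖ ≤ (∑ k ∈ Finset.range (d - 1 + 1), ‖r.coeff k‖) * ‖α‖ ^ (d - 1) :=
    eval_norm_bound r (d - 1) (r_natDegree_le p hmonic hdeg z) α h1
  have hDlarge : 2 * ‖r.eval α‖ + 1 ≤ ‖D‖ := by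
    nlinarith [hKey, hrb, hnormD]
  have hDne : D ≠ 0 := by
    intro h
    rw [h, norm_zero] at hDlarge
    nlinarith [norm_nonneg (r.eval α)]
  have hpe : p.eval α = r.eval α + D := by
    rw [hr, Polynomial.eval_sub, hDeval]; ring
  have hlam : 1 - p.eval α / D = -(r.eval α / D) := by
    field_simp [hpe]
    rw [hpe]; ring
  have hDpos : 0 < ‖D‖ := by nlinarith [norm_nonneg (r.eval α)]
  rw [hlam, norm_neg, norm_div, div_lt_one hDpos]
  nlinarith [norm_nonneg (r.eval α)]

end Part5
section Part6

lemma snoc_injective {d : ℕ} {z : Fin d → ℂ} {α : ℂ} (hz : Function.Injective z)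
    (hα : ∀ j, z j ≠ α) : Function.Injective (Fin.snoc z α : Fin (d+1) → ℂ) := by
  intro a b hab
  induction a using Fin.lastCases with
  | last =>
    induction b using Fin.lastCases with
    | last => rfl
    | cast b =>
      rw [Fin.snoc_last, Fin.snoc_castSucc] at hab
      exact absurd hab.symm (hα b)
  | cast a =>
    induction b using Fin.lastCases with
    | last =>
      rw [Fin.snoc_last, Fin.snoc_castSucc] at hab
      exact absurd hab (hα a)
    | cast b =>
      rw [Fin.snoc_castSucc, Fin.snoc_castSucc] at hab
      exact congrArg Fin.castSucc (hz hab)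

lemma prod_norm_lt_one {f : ℕ → ℂ} {n : ℕ} (hn : 1 ≤ n) (h : ∀ k < n, ‖f k‖ < 1) :
    ‖∏ k ∈ Finset.range n, f k‖ < 1 := by
  induction n with
  | zero => omega
  | succ n ih =>
    rw [Finset.prod_range_succ, norm_mul]
    rcases Nat.eq_zero_or_pos n with rfl | hpos
    · simpa using h 0 (by omega)
    · have h1 := ih hpos (fun k hk => h k (by omega))
      have h2 := h n (by omega)
      nlinarith [norm_nonneg (∏ k ∈ Finset.range n, f k), norm_nonneg (f n)]

end Part6

end WLift

/-- Lifting attracting cycles to higher degree (dynamical part): if `q` is an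
`n`-periodic point of `W_p` whose multiplier matrix has all eigenvalues of
absolute value `< 1`, and all iterates of `q` have pairwise distinct entries,
then for all `α` of sufficiently large absolute value, `(q, α)` is an
`n`-periodic point of `W_{(Z−α)p}` whose multiplier matrix has all eigenvalues
of absolute value `< 1`. -/
theorem weierstrass_lift_attracting_cycle
    (d n : ℕ) (hn : 1 ≤ n) (p : Polynomial ℂ) (hmonic : p.Monic)
    (hdeg : p.natDegree = d) (q : Fin d → ℂ)
    (hper : (wmap p)^[n] q = q)
    (horbit : ∀ m : ℕ, Function.Injective ((wmap p)^[m] q))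
    (heig : ∀ μ ∈ spectrum ℂ (jacobianMatrix ((wmap p)^[n]) q), ‖μ‖ < 1) :
    ∃ R : ℝ, ∀ α : ℂ, R < ‖α‖ →
      (wmap ((X - C α) * p))^[n] (Fin.snoc q α) = Fin.snoc q α ∧
      ∀ μ ∈ spectrum ℂ
          (jacobianMatrix ((wmap ((X - C α) * p))^[n]) (Fin.snoc q α)),
        ‖μ‖ < 1 := by
  classical
  have hperi : Function.IsPeriodicPt (wmap p) n q := hper
  set zm : ℕ → Fin d → ℂ := fun m => (wmap p)^[m] q with hzm
  have hmod : ∀ m, zm m = zm (m % n) := fun m => (hperi.iterate_mod_apply m).symm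
  set Cb : ℝ := 1 + (((Finset.range n ×ˢ (Finset.univ : Finset (Fin d))).sup
      fun x => ‖zm x.1 x.2‖₊ : NNReal) : ℝ) with hCbdef
  have hCble : ∀ m j, ‖zm m j‖ ≤ Cb := by
    intro m j
    have hmem : (m % n, j) ∈ Finset.range n ×ˢ (Finset.univ : Finset (Fin d)) :=
      Finset.mem_product.2 ⟨Finset.mem_range.2 (Nat.mod_lt m hn), Finset.mem_univ j⟩
    have hle := Finset.le_sup (f := fun x : ℕ × Fin d => ‖zm x.1 x.2‖₊) hmem
    have heq : ‖zm m j‖ = ‖zm (m % n) j‖ := by rw [hmod m]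
    rw [heq, ← coe_nnnorm]
    calc ((‖zm (m % n) j‖₊ : NNReal) : ℝ)
        ≤ (((Finset.range n ×ˢ (Finset.univ : Finset (Fin d))).sup
            fun x => ‖zm x.1 x.2‖₊ : NNReal) : ℝ) := NNReal.coe_le_coe.2 hle
      _ ≤ Cb := by rw [hCbdef]; linarith
  set K : ℕ → ℝ := fun m => ∑ k ∈ Finset.range (d - 1 + 1),
    ‖(p - ∏ j, (X - C (zm m j))).coeff k‖ with hKdef
  have hK0 : ∀ m, d = 0 → K m = 0 := by
    intro m h0
    subst h0
    have hp1 : p = 1 := hmonic.natDegree_eq_zero.1 hdeg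
    simp [hKdef, hp1]
  have hEv : ∀ᶠ t in (Filter.atTop : Filter ℝ), Cb < t ∧ 1 ≤ t ∧
      ∀ m ∈ Finset.range n, 2 * K m * t ^ (d - 1) + 1 ≤ (t - Cb) ^ d := by
    refine (Filter.eventually_gt_atTop Cb).and ((Filter.eventually_ge_atTop 1).and ?_)
    have hall := (Filter.eventually_all_finite ((Finset.range n).finite_toSet)).2
      (fun m _ => WLift.eventually_key d Cb (K m) (hK0 m))
    exact hall.mono fun t h m hm => h m (Finset.mem_coe.2 hm)
  obtain ⟨R, hR⟩ := Filter.eventually_atTop.1 hEv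
  refine ⟨R, fun α hα => ?_⟩
  have hnorm : R ≤ ‖α‖ := by exact hα.le
  obtain ⟨hCα, h1α, hKeyα⟩ := hR ‖α‖ hnorm
  have hzα : ∀ m (j : Fin d), zm m j ≠ α := by
    intro m j h
    have hb := hCble m j
    rw [h] at hb
    exact absurd hCα (not_lt.2 hb)
  have hlam : ∀ m, m < n → ‖1 - p.eval α / ∏ j, (α - zm m j)‖ < 1 := fun m hm =>
    WLift.lambda_lt_one p hmonic hdeg (zm m) Cb (fun j => hCble m j) α hCα h1α
      (hKeyα m (Finset.mem_range.2 hm))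
  have key : ∀ m : ℕ,
      (wmap ((X - C α) * p))^[m] (Fin.snoc q α) = Fin.snoc (zm m) α ∧
      DifferentiableAt ℂ ((wmap p)^[m]) q ∧
      DifferentiableAt ℂ ((wmap ((X - C α) * p))^[m]) (Fin.snoc q α) ∧
      (∀ i j : Fin d, jacobianMatrix ((wmap ((X - C α) * p))^[m]) (Fin.snoc q α)
          i.castSucc j.castSucc = jacobianMatrix ((wmap p)^[m]) q i j) ∧
      (∀ j : Fin d, jacobianMatrix ((wmap ((X - C α) * p))^[m]) (Fin.snoc q α)
          (Fin.last d) j.castSucc = 0) ∧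
      jacobianMatrix ((wmap ((X - C α) * p))^[m]) (Fin.snoc q α) (Fin.last d) (Fin.last d)
        = ∏ k ∈ Finset.range m, (1 - p.eval α / ∏ j, (α - zm k j)) := by
    intro m
    induction m with
    | zero =>
      refine ⟨rfl, differentiableAt_id, differentiableAt_id, ?_, ?_, ?_⟩
      · intro i j
        rw [Function.iterate_zero, Function.iterate_zero, WLift.jacobian_id,
          WLift.jacobian_id]
        simp [Matrix.one_apply, Fin.castSucc_inj]
      · intro j
        rw [Function.iterate_zero, WLift.jacobian_id]
        exact Matrix.one_apply_ne (Fin.castSucc_lt_last j).ne'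
      · rw [Function.iterate_zero, WLift.jacobian_id]
        simp [Matrix.one_apply]
    | succ m ih =>
      obtain ⟨hit, hdF, hdG, hul, hrow, hcor⟩ := ih
      have hinjm : Function.Injective (zm m) := horbit m
      have hzmα : ∀ j, zm m j ≠ α := fun j => hzα m j
      have hsnocinj : Function.Injective (Fin.snoc (zm m) α : Fin (d+1) → ℂ) :=
        WLift.snoc_injective hinjm hzmα
      have hdFs : DifferentiableAt ℂ (wmap p) (zm m) := WLift.wmap_differentiableAt p hinjm
      have hdGs : DifferentiableAt ℂ (wmap ((X - C α) * p)) (Fin.snoc (zm m) α) :=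
        WLift.wmap_differentiableAt _ hsnocinj
      have hFsucc : ((wmap p)^[m+1] : (Fin d → ℂ) → Fin d → ℂ)
          = fun v : Fin d → ℂ => wmap p ((wmap p)^[m] v) := by
        rw [Function.iterate_succ']; rfl
      have hGsucc : ((wmap ((X - C α) * p))^[m+1] : (Fin (d+1) → ℂ) → Fin (d+1) → ℂ)
          = fun v : Fin (d+1) → ℂ => wmap ((X - C α) * p) ((wmap ((X - C α) * p))^[m] v) := by
        rw [Function.iterate_succ']; rfl
      have hit' : (wmap ((X - C α) * p))^[m+1] (Fin.snoc q α) = Fin.snoc (zm (m+1)) α := by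
        rw [hGsucc]
        show wmap ((X - C α) * p) ((wmap ((X - C α) * p))^[m] (Fin.snoc q α)) = _
        rw [hit, WLift.wmap_snoc p α (zm m) hzmα,
          show zm (m+1) = wmap p (zm m) from Function.iterate_succ_apply' (wmap p) m q]
      have hdF' : DifferentiableAt ℂ ((wmap p)^[m+1]) q := by
        rw [hFsucc]
        exact DifferentiableAt.comp q hdFs hdF
      have hdGs' : DifferentiableAt ℂ (wmap ((X - C α) * p))
          ((wmap ((X - C α) * p))^[m] (Fin.snoc q α)) := by
        rw [hit]; exact hdGs
      have hdG' : DifferentiableAt ℂ ((wmap ((X - C α) * p))^[m+1]) (Fin.snoc q α) := by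
        rw [hGsucc]
        exact DifferentiableAt.comp _ hdGs' hdG
      have hJF : jacobianMatrix ((wmap p)^[m+1]) q
          = jacobianMatrix (wmap p) (zm m) * jacobianMatrix ((wmap p)^[m]) q := by
        rw [hFsucc]
        exact WLift.jacobian_comp hdFs hdF
      have hJG : jacobianMatrix ((wmap ((X - C α) * p))^[m+1]) (Fin.snoc q α)
          = jacobianMatrix (wmap ((X - C α) * p)) (Fin.snoc (zm m) α)
            * jacobianMatrix ((wmap ((X - C α) * p))^[m]) (Fin.snoc q α) := by
        rw [hGsucc]
        have hcomp := WLift.jacobian_comp (G := wmap ((X - C α) * p))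
          (F := (wmap ((X - C α) * p))^[m]) (z := Fin.snoc q α) hdGs' hdG
        rw [hcomp, hit]
      refine ⟨hit', hdF', hdG', ?_, ?_, ?_⟩
      · intro i j
        rw [hJG, hJF, Matrix.mul_apply, Matrix.mul_apply, Fin.sum_univ_castSucc,
          hrow j, mul_zero, add_zero]
        refine Finset.sum_congr rfl fun k _ => ?_
        rw [WLift.jac_step_ul p α hzmα i k, hul k j]
      · intro j
        rw [hJG, Matrix.mul_apply, Fin.sum_univ_castSucc, hrow j, mul_zero, add_zero]
        refine Finset.sum_eq_zero fun k _ => ?_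
        rw [WLift.jac_step_row p α (zm m) k, zero_mul]
      · rw [hJG, Matrix.mul_apply, Fin.sum_univ_castSucc, hcor,
          WLift.jac_step_corner p α hzmα, Finset.prod_range_succ,
          Finset.sum_eq_zero fun (k : Fin d) _ => by
            rw [WLift.jac_step_row p α (zm m) k, zero_mul]]
        ring
  obtain ⟨hitn, -, -, hul, hrow, hcor⟩ := key n
  have hitq : (wmap ((X - C α) * p))^[n] (Fin.snoc q α) = Fin.snoc q α := by
    rw [hitn, show zm n = q from hper]
  refine ⟨hitq, fun μ hμ => ?_⟩
  rcases WLift.spectrum_block _ (jacobianMatrix ((wmap p)^[n]) q) _ hul hrow hcor hμ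
    with h | h
  · exact heig μ h
  · rw [h]
    exact WLift.prod_norm_lt_one hn hlam
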